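/- arXiv:2110.15175 — 4 statements merged into one kernel-verified Lean document; each statement's English description precedes it below -/
import Mathlib

section
/- Let f : X → Y be a nonlinear Fréchet differentiable mapping of Hilbert spaces whose derivative f'_x is Lipschitz with constant L > 0 on a closed ball B_r(a), the linear map f'_a : X → Y is surjective, and ‖(f'_a)*(y)‖ ≥ ν‖y‖ for all y ∈ Y with ν > 0. Then for every ε < min{r, ν/(4L)}, the image f(B_ε(a)) ⊂ Y is convex. -/
open Metric Set NNReal

lemma aux_exists_preimage {X Y : Type*} [NormedAddCommGroup X] [InnerProductSpace ℝ X]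
    [CompleteSpace X] [NormedAddCommGroup Y] [InnerProductSpace ℝ Y] [CompleteSpace Y]
    (A : X →L[ℝ] Y) (ν : ℝ) (hν : 0 < ν) (hsurj : Function.Surjective A)
    (hadj : ∀ y, ν * ‖y‖ ≤ ‖ContinuousLinearMap.adjoint A y‖) :
    ∀ y : Y, ∃ x : X, A x = y ∧ ‖x‖ ≤ ν⁻¹ * ‖y‖ := by
  intro y
  set T := ContinuousLinearMap.adjoint A with hT
  have hanti : AntilipschitzWith (ν.toNNReal)⁻¹ T := by
    apply ContinuousLinearMap.antilipschitz_of_bound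
    intro z
    have h1 := hadj z
    rw [NNReal.coe_inv, Real.coe_toNNReal _ hν.le, inv_mul_eq_div, le_div_iff₀ hν]
    linarith
  have hclosed : IsClosed (Set.range T) := hanti.isClosed_range T.uniformContinuous
  have hclosed' : IsClosed ((LinearMap.range (T : Y →ₗ[ℝ] X) : Submodule ℝ X) : Set X) := by
    rw [LinearMap.coe_range]; exact hclosed
  haveI : CompleteSpace (LinearMap.range (T : Y →ₗ[ℝ] X) : Submodule ℝ X) := hclosed'.completeSpace_coe
  obtain ⟨x, hx⟩ := hsurj y
  obtain ⟨u, hu, v, hv, hxuv⟩ := (LinearMap.range (T : Y →ₗ[ℝ] X)).exists_add_mem_mem_orthogonal x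
  obtain ⟨z, hz⟩ := hu
  -- A v = 0
  have hAv : A v = 0 := by
    have h0 : (inner ℝ (A v) (A v) : ℝ) = 0 := by
      have := hv (T (A v)) (LinearMap.mem_range_self _ _)
      rwa [hT, ContinuousLinearMap.adjoint_inner_left] at this
    exact inner_self_eq_zero.mp h0
  have hAu : A u = y := by
    have : A x = A u + A v := by rw [hxuv, map_add]
    rw [hAv, add_zero] at this
    rw [← this, hx]
  refine ⟨u, hAu, ?_⟩
  have h2 : ‖u‖ ^ 2 ≤ ‖z‖ * ‖y‖ := by
    have : ‖u‖ ^ 2 = (inner ℝ z (A u) : ℝ) := by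
      rw [← real_inner_self_eq_norm_sq, ← hz, hT, ContinuousLinearMap.coe_coe, ContinuousLinearMap.adjoint_inner_left]
    rw [this, hAu]
    exact real_inner_le_norm z y
  have h3 : ν * ‖z‖ ≤ ‖u‖ := by rw [← hz]; exact hadj z
  rcases eq_or_lt_of_le (norm_nonneg u) with h | h
  · rw [← h]; positivity
  · rw [inv_mul_eq_div, le_div_iff₀ hν]
    nlinarith [norm_nonneg z, norm_nonneg y]

set_option maxHeartbeats 1000000 in
/-- Local convexity in Hilbert spaces (Proposition 1): if `f : X → Y` is
differentiable with `L`-Lipschitz derivative on `B_r(a)`, `f'_a` is surjective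
and `‖(f'_a)* y‖ ≥ ν‖y‖` for all `y`, then for every `ε < min {r, ν/(4L)}` the
image `f(B_ε(a))` is convex. -/
theorem local_convexity_hilbert
    (X Y : Type*) [NormedAddCommGroup X] [InnerProductSpace ℝ X] [CompleteSpace X]
    [NormedAddCommGroup Y] [InnerProductSpace ℝ Y] [CompleteSpace Y]
    (f : X → Y) (f' : X → X →L[ℝ] Y) (a : X) (r L ν : ℝ)
    (hr : 0 < r) (hL : 0 < L) (hν : 0 < ν)
    (hdiff : ∀ x ∈ Metric.closedBall a r, HasFDerivAt f (f' x) x)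
    (hlip : ∀ x ∈ Metric.closedBall a r, ∀ y ∈ Metric.closedBall a r,
      ‖f' x - f' y‖ ≤ L * ‖x - y‖)
    (hsurj : Function.Surjective (f' a))
    (hadj : ∀ y : Y, ν * ‖y‖ ≤ ‖ContinuousLinearMap.adjoint (f' a) y‖) :
    ∀ ε : ℝ, 0 < ε → ε < min r (ν / (4 * L)) →
      Convex ℝ (f '' Metric.closedBall a ε) := by
  intro ε hε hεlt
  have hεr : ε < r := lt_of_lt_of_le hεlt (min_le_left _ _)
  have hεν : ε < ν / (4 * L) := lt_of_lt_of_le hεlt (min_le_right _ _)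
  have hLε : L * ε < ν / 4 := by
    rw [lt_div_iff₀ (by positivity : (0:ℝ) < 4 * L)] at hεν
    nlinarith
  have hball : Metric.closedBall a ε ⊆ Metric.closedBall a r :=
    Metric.closedBall_subset_closedBall hεr.le
  choose g hg1 hg2 using aux_exists_preimage (f' a) ν hν hsurj hadj
  let f'symm : (f' a).NonlinearRightInverse :=
    { toFun := g
      nnnorm := (ν⁻¹).toNNReal
      bound' := fun y => by
        rw [Real.coe_toNNReal _ (by positivity)]; exact hg2 y
      right_inv' := hg1 }
  have hnn : ((f'symm.nnnorm : ℝ))⁻¹ = ν := by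
    show ((((ν⁻¹).toNNReal : NNReal) : ℝ))⁻¹ = ν
    rw [Real.coe_toNNReal _ (by positivity), inv_inv]
  have happrox : ApproximatesLinearOn f (f' a) (Metric.closedBall a ε) (L * ε).toNNReal := by
    intro x hx y hy
    rw [Real.coe_toNNReal _ (by positivity)]
    refine (convex_closedBall a ε).norm_image_sub_le_of_norm_hasFDerivWithin_le'
      (fun z hz => (hdiff z (hball hz)).hasFDerivWithinAt) (fun z hz => ?_) hy hx
    refine (hlip z (hball hz) a (Metric.mem_closedBall_self hr.le)).trans ?_
    have : ‖z - a‖ ≤ ε := by rwa [← dist_eq_norm, ← Metric.mem_closedBall]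
    nlinarith
  rintro p ⟨x₁, hx₁, rfl⟩ q ⟨x₂, hx₂, rfl⟩ t u ht hu htu
  set xt := t • x₁ + u • x₂ with hxt
  have hxtball : xt ∈ Metric.closedBall a ε := (convex_closedBall a ε) hx₁ hx₂ ht hu htu
  set d2 := t * u * ‖x₁ - x₂‖ ^ 2 with hd2def
  have hd2 : 0 ≤ d2 := by positivity
  have hx1a : ‖x₁ - a‖ ≤ ε := by rwa [← dist_eq_norm, ← Metric.mem_closedBall]
  have hx2a : ‖x₂ - a‖ ≤ ε := by rwa [← dist_eq_norm, ← Metric.mem_closedBall]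
  -- key geometric inequality : ‖xt - a‖² ≤ ε² - d2
  have key1 : ‖xt - a‖ ^ 2 ≤ ε ^ 2 - d2 := by
    have hxta : xt - a = t • (x₁ - a) + u • (x₂ - a) := by
      rw [hxt]; match_scalars <;> linarith
    have e1 : ‖t • (x₁ - a) + u • (x₂ - a)‖ ^ 2
        = t ^ 2 * ‖x₁ - a‖ ^ 2 + 2 * (t * u) * (inner ℝ (x₁ - a) (x₂ - a) : ℝ)
          + u ^ 2 * ‖x₂ - a‖ ^ 2 := by
      rw [norm_add_sq_real, norm_smul, norm_smul, real_inner_smul_left, real_inner_smul_right]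
      simp only [Real.norm_eq_abs, abs_of_nonneg ht, abs_of_nonneg hu, mul_pow]
      ring
    have e2 : ‖x₁ - x₂‖ ^ 2
        = ‖x₁ - a‖ ^ 2 - 2 * (inner ℝ (x₁ - a) (x₂ - a) : ℝ) + ‖x₂ - a‖ ^ 2 := by
      have h : x₁ - x₂ = (x₁ - a) - (x₂ - a) := by abel
      rw [h, norm_sub_sq_real]
    rw [hxta, e1, hd2def, e2]
    have hA : ‖x₁ - a‖ ^ 2 ≤ ε ^ 2 := by nlinarith [norm_nonneg (x₁ - a)]
    have hB : ‖x₂ - a‖ ^ 2 ≤ ε ^ 2 := by nlinarith [norm_nonneg (x₂ - a)]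
    have hfin : t * ‖x₁ - a‖ ^ 2 + u * ‖x₂ - a‖ ^ 2 ≤ ε ^ 2 := by
      calc t * ‖x₁ - a‖ ^ 2 + u * ‖x₂ - a‖ ^ 2 ≤ t * ε ^ 2 + u * ε ^ 2 :=
            add_le_add (mul_le_mul_of_nonneg_left hA ht) (mul_le_mul_of_nonneg_left hB hu)
        _ = ε ^ 2 := by rw [← add_mul, htu, one_mul]
    have h3 : t ^ 2 * ‖x₁ - a‖ ^ 2 + 2 * (t * u) * (inner ℝ (x₁ - a) (x₂ - a) : ℝ)
        + u ^ 2 * ‖x₂ - a‖ ^ 2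
        + t * u * (‖x₁ - a‖ ^ 2 - 2 * (inner ℝ (x₁ - a) (x₂ - a) : ℝ) + ‖x₂ - a‖ ^ 2)
        = t * ‖x₁ - a‖ ^ 2 + u * ‖x₂ - a‖ ^ 2 := by
      linear_combination (t * ‖x₁ - a‖ ^ 2 + u * ‖x₂ - a‖ ^ 2) * htu
    linarith
  have hd2ε : d2 ≤ ε ^ 2 := by nlinarith [sq_nonneg ‖xt - a‖]
  set δ := ε - Real.sqrt (ε ^ 2 - d2) with hδdef
  have hsqle : Real.sqrt (ε ^ 2 - d2) ≤ ε := by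
    calc Real.sqrt (ε ^ 2 - d2) ≤ Real.sqrt (ε ^ 2) := Real.sqrt_le_sqrt (by linarith)
    _ = ε := Real.sqrt_sq hε.le
  have hδ0 : 0 ≤ δ := by rw [hδdef, sub_nonneg]; exact hsqle
  have hδlow : d2 / (2 * ε) ≤ δ := by
    rw [hδdef, le_sub_comm]
    have h1 : 0 ≤ ε - d2 / (2 * ε) := by
      rw [sub_nonneg, div_le_iff₀ (by positivity)]
      nlinarith
    have hsq : (ε - d2 / (2 * ε)) ^ 2 = ε ^ 2 - d2 + (d2 / (2 * ε)) ^ 2 := by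
      field_simp; ring
    refine (Real.sqrt_le_sqrt ?_).trans_eq (Real.sqrt_sq h1)
    rw [hsq]; nlinarith [sq_nonneg (d2 / (2 * ε))]
  have hxtnorm : ‖xt - a‖ ≤ Real.sqrt (ε ^ 2 - d2) := by
    have h := Real.sqrt_le_sqrt key1
    rwa [Real.sqrt_sq (norm_nonneg _)] at h
  have hsub : Metric.closedBall xt δ ⊆ Metric.closedBall a ε := by
    intro z hz
    rw [Metric.mem_closedBall] at hz ⊢
    calc dist z a ≤ dist z xt + dist xt a := dist_triangle _ _ _
      _ ≤ δ + Real.sqrt (ε ^ 2 - d2) :=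
          add_le_add hz (le_trans (le_of_eq (dist_eq_norm xt a)) hxtnorm)
      _ = ε := by rw [hδdef]; ring
  -- Taylor remainder bound
  have hrem : ∀ x ∈ Metric.closedBall a ε,
      ‖f x - f xt - (f' xt) (x - xt)‖ ≤ L * ‖x - xt‖ ^ 2 := by
    intro x hx
    set s := Metric.closedBall xt ‖x - xt‖ ∩ Metric.closedBall a ε with hs
    have hconv : Convex ℝ s := (convex_closedBall _ _).inter (convex_closedBall _ _)
    have hxs : x ∈ s := ⟨by simp [Metric.mem_closedBall, dist_eq_norm], hx⟩
    have hxts : xt ∈ s := ⟨Metric.mem_closedBall_self (norm_nonneg _), hxtball⟩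
    have hmv := hconv.norm_image_sub_le_of_norm_hasFDerivWithin_le'
      (f' := f') (φ := f' xt) (C := L * ‖x - xt‖)
      (fun z hz => (hdiff z (hball hz.2)).hasFDerivWithinAt)
      (fun z hz => by
        refine (hlip z (hball hz.2) xt (hball hxtball)).trans ?_
        have hzx : ‖z - xt‖ ≤ ‖x - xt‖ := by
          have h := hz.1; rwa [Metric.mem_closedBall, dist_eq_norm] at h
        nlinarith [norm_nonneg (z - xt)])
      hxts hxs
    calc ‖f x - f xt - (f' xt) (x - xt)‖ ≤ L * ‖x - xt‖ * ‖x - xt‖ := hmv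
      _ = L * ‖x - xt‖ ^ 2 := by ring
  have hx1t : ‖x₁ - xt‖ = u * ‖x₁ - x₂‖ := by
    have h : x₁ - xt = u • (x₁ - x₂) := by rw [hxt]; match_scalars <;> linarith
    rw [h, norm_smul, Real.norm_eq_abs, abs_of_nonneg hu]
  have hx2t : ‖x₂ - xt‖ = t * ‖x₁ - x₂‖ := by
    have h : x₂ - xt = -(t • (x₁ - x₂)) := by rw [hxt]; match_scalars <;> linarith
    rw [h, norm_neg, norm_smul, Real.norm_eq_abs, abs_of_nonneg ht]
  -- defect bound
  have hD : ‖t • f x₁ + u • f x₂ - f xt‖ ≤ L * d2 := by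
    have hzero : t • (x₁ - xt) + u • (x₂ - xt) = 0 := by
      have h1 : t • (x₁ - xt) + u • (x₂ - xt) = (t • x₁ + u • x₂) - (t + u) • xt := by
        module
      rw [h1, htu, one_smul, ← hxt, sub_self]
    have hA : t • (f' xt) (x₁ - xt) + u • (f' xt) (x₂ - xt) = 0 := by
      rw [← map_smul, ← map_smul, ← map_add, hzero, map_zero]
    have hrw : t • f x₁ + u • f x₂ - f xt
        = t • (f x₁ - f xt - (f' xt) (x₁ - xt))
          + u • (f x₂ - f xt - (f' xt) (x₂ - xt)) := by
      rw [show t • (f x₁ - f xt - (f' xt) (x₁ - xt))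
            + u • (f x₂ - f xt - (f' xt) (x₂ - xt))
          = (t • f x₁ + u • f x₂ - (t + u) • f xt)
            - (t • (f' xt) (x₁ - xt) + u • (f' xt) (x₂ - xt)) by module]
      rw [hA, sub_zero, htu, one_smul]
    rw [hrw]
    have hr1 := hrem x₁ hx₁
    have hr2 := hrem x₂ hx₂
    calc ‖t • (f x₁ - f xt - (f' xt) (x₁ - xt)) + u • (f x₂ - f xt - (f' xt) (x₂ - xt))‖
        ≤ t * ‖f x₁ - f xt - (f' xt) (x₁ - xt)‖ + u * ‖f x₂ - f xt - (f' xt) (x₂ - xt)‖ := by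
          refine (norm_add_le _ _).trans ?_
          rw [norm_smul, norm_smul, Real.norm_eq_abs, Real.norm_eq_abs,
            abs_of_nonneg ht, abs_of_nonneg hu]
      _ ≤ t * (L * ‖x₁ - xt‖ ^ 2) + u * (L * ‖x₂ - xt‖ ^ 2) := by
          refine add_le_add (mul_le_mul_of_nonneg_left hr1 ht)
            (mul_le_mul_of_nonneg_left hr2 hu)
      _ = L * ((t * u ^ 2 + u * t ^ 2) * ‖x₁ - x₂‖ ^ 2) := by
          rw [hx1t, hx2t]; ring
      _ = L * d2 := by
          rw [hd2def]; linear_combination L * t * u * ‖x₁ - x₂‖ ^ 2 * htu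
  -- conclude via surjectivity on small balls
  have hd2δ : d2 ≤ 2 * ε * δ := by
    rw [div_le_iff₀ (by positivity : (0:ℝ) < 2 * ε)] at hδlow
    linarith
  have hyt : t • f x₁ + u • f x₂ ∈
      Metric.closedBall (f xt) ((((f'symm.nnnorm : ℝ))⁻¹ - ((L * ε).toNNReal : ℝ)) * δ) := by
    rw [Metric.mem_closedBall, dist_eq_norm, hnn, Real.coe_toNNReal _ (by positivity)]
    refine hD.trans ?_
    nlinarith [mul_nonneg hδ0 (show (0:ℝ) ≤ ν - 3 * (L * ε) by nlinarith)]
  obtain ⟨x, hxmem, hfx⟩ :=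
    happrox.surjOn_closedBall_of_nonlinearRightInverse f'symm hδ0 hsub hyt
  exact ⟨x, hsub hxmem, hfx⟩
end

section
/- Let X be a Banach space whose norm has modulus of convexity of power type 2, with constant C ∈ (0,1) such that ‖(x+y)/2‖ ≤ 1 − C‖x−y‖² for ‖x‖,‖y‖ ≤ 1. Let f : U → V be a homeomorphism between open subsets of X that is Lip-differentiable at each point of U and whose inverse f⁻¹ : V → U is locally Lipschitz at each point of V. Then f is locally convex: every point x₀ ∈ U and neighborhood O(x₀) admit a convex neighborhood U(x₀) ⊂ O(x₀) whose image f(U(x₀)) is convex. -/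
/-- Theorem 3: Let `X` be a Banach space whose norm has modulus of convexity of
power type 2, with constant `C ∈ (0,1)` such that `‖(x+y)/2‖ ≤ 1 - C‖x-y‖²`
for `‖x‖, ‖y‖ ≤ 1`. A homeomorphism `f : U → V` between open subsets of `X`
which is Lip-differentiable at each point of `U` and whose inverse `g = f⁻¹` is
locally Lipschitz at each point of `V` is locally convex. -/
theorem local_convexity_banach_power_two
    (X : Type*) [NormedAddCommGroup X] [NormedSpace ℝ X] [CompleteSpace X]
    (C : ℝ) (hC0 : 0 < C) (hC1 : C < 1)
    (hconv : ∀ x y : X, ‖x‖ ≤ 1 → ‖y‖ ≤ 1 →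
      ‖(1 / 2 : ℝ) • (x + y)‖ ≤ 1 - C * ‖x - y‖ ^ 2)
    (U V : Set X) (hUopen : IsOpen U) (hVopen : IsOpen V)
    (f g : X → X)
    (hfV : Set.MapsTo f U V) (hgU : Set.MapsTo g V U)
    (hgf : ∀ x ∈ U, g (f x) = x) (hfg : ∀ y ∈ V, f (g y) = y)
    (hfc : ContinuousOn f U) (hgc : ContinuousOn g V)
    -- `f` is Lip-differentiable at each point of `U`:
    (hlipdiff : ∀ x₀ ∈ U, ∃ W ∈ nhds x₀, W ⊆ U ∧
      ∃ (f' : X → X →L[ℝ] X) (L : ℝ),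
        (∀ x ∈ W, HasFDerivAt f (f' x) x) ∧
        ∀ x ∈ W, ∀ y ∈ W, ‖f y - f x - f' x (y - x)‖ ≤ L * ‖y - x‖ ^ 2)
    -- `f⁻¹` is locally Lipschitz at each point of `V`:
    (hglip : ∀ y₀ ∈ V, ∃ W' ∈ nhds y₀, W' ⊆ V ∧ ∃ L : ℝ,
      ∀ u ∈ W', ∀ v ∈ W', ‖g u - g v‖ ≤ L * ‖u - v‖) :
    -- `f` is locally convex:
    ∀ x₀ ∈ U, ∀ O : Set X, IsOpen O → x₀ ∈ O → O ⊆ U →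
      ∃ Ux : Set X, Ux ∈ nhds x₀ ∧ Ux ⊆ O ∧ Convex ℝ Ux ∧
        Convex ℝ (f '' Ux) := by
  intro x₀ hx₀U O hOopen hx₀O hOU
  obtain ⟨W, hWnhds, hWU, f', L, hderiv, hLb⟩ := hlipdiff x₀ hx₀U
  obtain ⟨W', hW'nhds, hW'V, L', hL'⟩ := hglip (f x₀) (hfV hx₀U)
  set L₁ : ℝ := max L 1 with hL₁def
  set K : ℝ := max L' 1 with hKdef
  have hL₁1 : (1:ℝ) ≤ L₁ := le_max_right _ _
  have hK1 : (1:ℝ) ≤ K := le_max_right _ _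
  have hLL₁ : L ≤ L₁ := le_max_left _ _
  have hL'K : L' ≤ K := le_max_left _ _
  have hKL : (0:ℝ) < K * L₁ := mul_pos (by linarith) (by linarith)
  obtain ⟨ε, hε, hεW'⟩ := Metric.mem_nhds_iff.mp hW'nhds
  have hfx₀ : ContinuousAt f x₀ := hfc.continuousAt (hUopen.mem_nhds hx₀U)
  obtain ⟨δ₂, hδ₂, hδ₂sub⟩ := Metric.mem_nhds_iff.mp
    (hfx₀.preimage_mem_nhds (Metric.ball_mem_nhds (f x₀) hε))
  obtain ⟨δ₁, hδ₁, hδ₁sub⟩ := Metric.mem_nhds_iff.mp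
    (Filter.inter_mem (hOopen.mem_nhds hx₀O) hWnhds)
  set r : ℝ := min (min δ₁ δ₂) (C / (K * L₁)) with hrdef
  have hr : 0 < r := lt_min (lt_min hδ₁ hδ₂) (div_pos hC0 hKL)
  have hrC : r * (K * L₁) ≤ C := by
    have h := min_le_right (min δ₁ δ₂) (C / (K * L₁))
    exact (le_div_iff₀ hKL).mp h
  have hBOW : Metric.ball x₀ r ⊆ O ∩ W :=
    (Metric.ball_subset_ball ((min_le_left _ _).trans (min_le_left _ _))).trans hδ₁sub
  have hBO : Metric.ball x₀ r ⊆ O := fun x hx => (hBOW hx).1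
  have hBW : Metric.ball x₀ r ⊆ W := fun x hx => (hBOW hx).2
  have hBU : Metric.ball x₀ r ⊆ U := hBW.trans hWU
  have hBf : ∀ x ∈ Metric.ball x₀ r, f x ∈ Metric.ball (f x₀) ε := fun x hx =>
    hδ₂sub (Metric.ball_subset_ball ((min_le_left _ _).trans (min_le_right _ _)) hx)
  refine ⟨Metric.ball x₀ r, Metric.ball_mem_nhds x₀ hr, hBO, convex_ball x₀ r, ?_⟩
  suffices key : ∀ p ∈ Metric.ball x₀ r, ∀ q ∈ Metric.ball x₀ r, ∀ s : ℝ,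
      0 ≤ s → s ≤ 1/2 → s • f p + (1-s) • f q ∈ f '' Metric.ball x₀ r by
    intro u hu v hv s t hs ht hst
    obtain ⟨p, hp, rfl⟩ := hu
    obtain ⟨q, hq, rfl⟩ := hv
    rcases le_total s t with h | h
    · have ht' : t = 1 - s := by linarith
      subst ht'
      exact key p hp q hq s hs (by linarith)
    · have hs' : s = 1 - t := by linarith
      subst hs'
      rw [add_comm]
      exact key q hq p hp t ht (by linarith)
  intro p hp q hq s hs hs2
  rcases eq_or_ne p q with rfl | hpq
  · exact ⟨p, hp, by module⟩
  rcases hs.eq_or_lt with h | hs0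
  · rw [← h]
    simpa using Set.mem_image_of_mem f hq
  have hd0 : 0 < ‖p - q‖ := norm_pos_iff.mpr (sub_ne_zero.mpr hpq)
  set n : X := s • p + (1-s) • q with hndef
  have hn : n ∈ Metric.ball x₀ r := (convex_ball x₀ r) hp hq hs (by linarith) (by ring)
  set z : X := s • f p + (1-s) • f q with hzdef
  have hzW' : z ∈ W' :=
    hεW' ((convex_ball (f x₀) ε) (hBf p hp) (hBf q hq) hs (by linarith) (by ring))
  have hfnW' : f n ∈ W' := hεW' (hBf n hn)
  -- error estimate from Lip-differentiability
  have hA0 : s • (f' n (p - n)) + (1-s) • (f' n (q - n)) = 0 := by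
    rw [← (f' n).map_smul, ← (f' n).map_smul, ← (f' n).map_add]
    have h0 : s • (p - n) + (1-s) • (q - n) = 0 := by rw [hndef]; module
    rw [h0, (f' n).map_zero]
  have key_eq : z - f n
      = s • (f p - f n - f' n (p - n)) + (1-s) • (f q - f n - f' n (q - n)) := by
    have h1 : s • (f p - f n - f' n (p - n)) + (1-s) • (f q - f n - f' n (q - n))
        = (s • f p + (1-s) • f q) - (s • (f n) + (1-s) • (f n))
          - (s • (f' n (p - n)) + (1-s) • (f' n (q - n))) := by module
    have h2 : s • (f n) + (1-s) • (f n) = f n := by rw [← add_smul]; norm_num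
    rw [hzdef, h1, h2, hA0, sub_zero]
  have hpn : ‖p - n‖ = (1-s) * ‖p - q‖ := by
    have h : p - n = (1-s) • (p - q) := by rw [hndef]; module
    rw [h, norm_smul, Real.norm_eq_abs, abs_of_nonneg (by linarith : (0:ℝ) ≤ 1-s)]
  have hqn : ‖q - n‖ = s * ‖p - q‖ := by
    have h : q - n = s • (q - p) := by rw [hndef]; module
    rw [h, norm_smul, Real.norm_eq_abs, abs_of_nonneg hs, norm_sub_rev]
  have hEp : ‖f p - f n - f' n (p - n)‖ ≤ L₁ * ((1-s) * ‖p - q‖)^2 := by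
    have h := hLb n (hBW hn) p (hBW hp)
    rw [hpn] at h
    exact h.trans (mul_le_mul_of_nonneg_right hLL₁ (by positivity))
  have hEq : ‖f q - f n - f' n (q - n)‖ ≤ L₁ * (s * ‖p - q‖)^2 := by
    have h := hLb n (hBW hn) q (hBW hq)
    rw [hqn] at h
    exact h.trans (mul_le_mul_of_nonneg_right hLL₁ (by positivity))
  have hz_err : ‖z - f n‖ ≤ L₁ * (s * (1-s) * ‖p - q‖^2) := by
    rw [key_eq]
    have hb := norm_add_le (s • (f p - f n - f' n (p - n)))
      ((1-s) • (f q - f n - f' n (q - n)))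
    rw [norm_smul, norm_smul, Real.norm_eq_abs, Real.norm_eq_abs,
      abs_of_nonneg hs, abs_of_nonneg (by linarith : (0:ℝ) ≤ 1-s)] at hb
    have t1 := mul_le_mul_of_nonneg_left hEp hs
    have t2 := mul_le_mul_of_nonneg_left hEq (by linarith : (0:ℝ) ≤ 1-s)
    nlinarith [hb, t1, t2]
  -- uniform convexity estimate
  have hpr : ‖p - x₀‖ ≤ r := by
    have h := Metric.mem_ball.mp hp; rw [dist_eq_norm] at h; linarith
  have hqr : ‖q - x₀‖ ≤ r := by
    have h := Metric.mem_ball.mp hq; rw [dist_eq_norm] at h; linarith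
  have hx1 : ‖r⁻¹ • (p - x₀)‖ ≤ 1 := by
    rw [norm_smul, Real.norm_eq_abs, abs_inv, abs_of_pos hr]
    calc r⁻¹ * ‖p - x₀‖ ≤ r⁻¹ * r :=
          mul_le_mul_of_nonneg_left hpr (inv_nonneg.mpr hr.le)
      _ = 1 := inv_mul_cancel₀ hr.ne'
  have hx2 : ‖r⁻¹ • (q - x₀)‖ ≤ 1 := by
    rw [norm_smul, Real.norm_eq_abs, abs_inv, abs_of_pos hr]
    calc r⁻¹ * ‖q - x₀‖ ≤ r⁻¹ * r :=
          mul_le_mul_of_nonneg_left hqr (inv_nonneg.mpr hr.le)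
      _ = 1 := inv_mul_cancel₀ hr.ne'
  set mid : X := (1/2 : ℝ) • (p + q) with hmiddef
  have Hc := hconv (r⁻¹ • (p - x₀)) (r⁻¹ • (q - x₀)) hx1 hx2
  have e2 : (1 / 2 : ℝ) • (r⁻¹ • (p - x₀) + r⁻¹ • (q - x₀)) = r⁻¹ • (mid - x₀) := by
    rw [hmiddef]; module
  have e3 : r⁻¹ • (p - x₀) - r⁻¹ • (q - x₀) = r⁻¹ • (p - q) := by module
  rw [e2, e3, norm_smul, norm_smul, Real.norm_eq_abs, abs_inv, abs_of_pos hr] at Hc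
  have hmid2 : r * ‖mid - x₀‖ ≤ r^2 - C * ‖p - q‖^2 := by
    have h := mul_le_mul_of_nonneg_left Hc (by positivity : (0:ℝ) ≤ r^2)
    have hrne : r ≠ 0 := hr.ne'
    calc r * ‖mid - x₀‖ = r^2 * (r⁻¹ * ‖mid - x₀‖) := by field_simp
      _ ≤ r^2 * (1 - C * (r⁻¹ * ‖p - q‖)^2) := h
      _ = r^2 - C * ‖p - q‖^2 := by field_simp
  have hn_eq : n - x₀ = (1 - 2*s) • (q - x₀) + (2*s) • (mid - x₀) := by
    rw [hndef, hmiddef]; module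
  have hn2 : r * ‖n - x₀‖ ≤ r^2 - 2*s*(C * ‖p - q‖^2) := by
    have h4 : ‖n - x₀‖ ≤ (1-2*s) * ‖q - x₀‖ + (2*s) * ‖mid - x₀‖ := by
      rw [hn_eq]
      refine (norm_add_le _ _).trans ?_
      rw [norm_smul, norm_smul, Real.norm_eq_abs, Real.norm_eq_abs,
        abs_of_nonneg (by linarith : (0:ℝ) ≤ 1-2*s),
        abs_of_nonneg (by linarith : (0:ℝ) ≤ 2*s)]
    have t1 : (1-2*s) * (r * ‖q - x₀‖) ≤ (1-2*s) * (r * r) :=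
      mul_le_mul_of_nonneg_left (mul_le_mul_of_nonneg_left hqr hr.le) (by linarith)
    have t2 : (2*s) * (r * ‖mid - x₀‖) ≤ (2*s) * (r^2 - C * ‖p - q‖^2) :=
      mul_le_mul_of_nonneg_left hmid2 (by linarith)
    have t3 : r * ‖n - x₀‖ ≤ r * ((1-2*s) * ‖q - x₀‖ + (2*s) * ‖mid - x₀‖) :=
      mul_le_mul_of_nonneg_left h4 hr.le
    linarith [t1, t2, t3]
  -- Lipschitz estimate for g
  have hgfn : g (f n) = n := hgf n (hBU hn)
  have hglip2 : ‖g z - n‖ ≤ K * (L₁ * (s * (1-s) * ‖p - q‖^2)) := by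
    have h := hL' z hzW' (f n) hfnW'
    rw [hgfn] at h
    calc ‖g z - n‖ ≤ L' * ‖z - f n‖ := h
      _ ≤ K * ‖z - f n‖ := mul_le_mul_of_nonneg_right hL'K (norm_nonneg _)
      _ ≤ K * (L₁ * (s * (1-s) * ‖p - q‖^2)) :=
          mul_le_mul_of_nonneg_left hz_err (by linarith)
  have htri : ‖g z - x₀‖ ≤ ‖g z - n‖ + ‖n - x₀‖ := by
    have h := dist_triangle (g z) n x₀
    simpa [dist_eq_norm] using h
  have hfinal : r * ‖g z - x₀‖ < r * r := by
    have t4 : r * ‖g z - x₀‖ ≤ r * (‖g z - n‖ + ‖n - x₀‖) :=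
      mul_le_mul_of_nonneg_left htri hr.le
    have t5 : r * ‖g z - n‖ ≤ r * (K * (L₁ * (s * (1-s) * ‖p - q‖^2))) :=
      mul_le_mul_of_nonneg_left hglip2 hr.le
    have t6 : (r * (K * L₁)) * (s * (1-s) * ‖p - q‖^2)
        ≤ C * (s * (1-s) * ‖p - q‖^2) :=
      mul_le_mul_of_nonneg_right hrC (mul_nonneg (mul_nonneg hs (by linarith)) (by positivity))
    have t7 : 0 < C * (s * ‖p - q‖^2) :=
      mul_pos hC0 (mul_pos hs0 (pow_pos hd0 2))
    have t8 : 0 ≤ C * (s^2 * ‖p - q‖^2) :=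
      mul_nonneg hC0.le (by positivity)
    linarith [t4, t5, t6, t7, t8, hn2]
  have hlt : ‖g z - x₀‖ < r := lt_of_mul_lt_mul_left hfinal hr.le
  exact ⟨g z, by rw [Metric.mem_ball, dist_eq_norm]; exact hlt, hfg z (hW'V hzW')⟩
end

section
/- Let X be a Banach space and Y a Banach space with modulus of convexity of power 2. A homeomorphism f : U → V between open subsets U ⊂ X and V ⊂ Y is locally convex provided f is locally second order Lipschitz and f⁻¹ : V → U is locally Lipschitz. -/
lemma dyadic_mem_of_midpoint (S : Set ℝ) (h0 : (0:ℝ) ∈ S) (h1 : (1:ℝ) ∈ S)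
    (hmid : ∀ s ∈ S, ∀ t ∈ S, (s + t) / 2 ∈ S) :
    ∀ n : ℕ, ∀ k : ℕ, k ≤ 2 ^ n → ((k : ℝ) / 2 ^ n) ∈ S := by
  intro n
  induction n with
  | zero =>
    intro k hk
    interval_cases k
    · simpa using h0
    · simpa using h1
  | succ n ih =>
    intro k hk
    rcases Nat.even_or_odd k with ⟨j, hj⟩ | ⟨j, hj⟩
    · have hj' : j ≤ 2 ^ n := by omega
      have := ih j hj'
      have : ((k : ℝ) / 2 ^ (n+1)) = (j : ℝ) / 2 ^ n := by
        subst hj; push_cast; ring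
      rw [this]
      exact ih j hj'
    · have hj1 : j ≤ 2 ^ n := by omega
      have hj2 : j + 1 ≤ 2 ^ n := by omega
      have h' := hmid _ (ih j hj1) _ (ih (j+1) hj2)
      have : ((k : ℝ) / 2 ^ (n+1)) = ((j : ℝ) / 2 ^ n + ((j:ℕ)+1 : ℝ) / 2 ^ n) / 2 := by
        subst hj; push_cast; ring
      rw [this]
      exact_mod_cast h'

lemma Icc_subset_of_closed_midpoint (S : Set ℝ) (hS : IsClosed S)
    (h0 : (0:ℝ) ∈ S) (h1 : (1:ℝ) ∈ S)
    (hmid : ∀ s ∈ S, ∀ t ∈ S, (s + t) / 2 ∈ S) :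
    Set.Icc (0:ℝ) 1 ⊆ S := by
  intro t ht
  obtain ⟨ht0, ht1⟩ := ht
  have key := dyadic_mem_of_midpoint S h0 h1 hmid
  set a : ℕ → ℝ := fun n => (⌊t * 2 ^ n⌋ : ℝ) / 2 ^ n with ha
  have hmem : ∀ n, a n ∈ S := by
    intro n
    have h0' : 0 ≤ t * 2 ^ n := by positivity
    have hfl : 0 ≤ ⌊t * 2 ^ n⌋ := Int.floor_nonneg.2 h0'
    have hub : ⌊t * 2 ^ n⌋ ≤ 2 ^ n := by
      have : t * 2 ^ n ≤ 2 ^ n := by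
        nlinarith [pow_pos (by norm_num : (0:ℝ) < 2) n]
      have hfl2 : (⌊t * 2 ^ n⌋ : ℝ) ≤ (2:ℝ) ^ n := le_trans (Int.floor_le _) this
      exact_mod_cast hfl2
    lift ⌊t * 2 ^ n⌋ to ℕ using hfl with k hk
    have hk2 : k ≤ 2 ^ n := by exact_mod_cast hub
    have hk' := key n k hk2
    show ((⌊t * 2 ^ n⌋ : ℝ) / 2 ^ n) ∈ S
    rw [← hk]
    push_cast
    exact_mod_cast hk'
  have hconv : Filter.Tendsto a Filter.atTop (nhds t) := by
    have hle : ∀ n, t - 1 / 2 ^ n ≤ a n := by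
      intro n
      have h2 : (0:ℝ) < 2 ^ n := by positivity
      show t - 1 / 2 ^ n ≤ (⌊t * 2 ^ n⌋ : ℝ) / 2 ^ n
      rw [sub_le_iff_le_add, ← add_div, le_div_iff₀ h2]
      nlinarith [Int.sub_one_lt_floor (t * 2 ^ n)]
    have hge : ∀ n, a n ≤ t := by
      intro n
      have h2 : (0:ℝ) < 2 ^ n := by positivity
      show (⌊t * 2 ^ n⌋ : ℝ) / 2 ^ n ≤ t
      rw [div_le_iff₀ h2]
      exact Int.floor_le _
    have hlim : Filter.Tendsto (fun n : ℕ => t - 1 / 2 ^ n) Filter.atTop (nhds t) := by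
      have : Filter.Tendsto (fun n : ℕ => (1:ℝ) / 2 ^ n) Filter.atTop (nhds 0) := by
        simpa [one_div, inv_pow] using
          tendsto_pow_atTop_nhds_zero_of_lt_one (by norm_num : (0:ℝ) ≤ 1/2) (by norm_num)
      simpa using Filter.Tendsto.const_sub t this
    exact tendsto_of_tendsto_of_tendsto_of_le_of_le hlim tendsto_const_nhds hle hge
  exact hS.mem_of_tendsto hconv (Filter.Eventually.of_forall hmem)

set_option maxHeartbeats 1000000 in
/-- Theorem: Let `X` be a Banach space and `Y` a Banach space with modulus of
convexity of power 2. A homeomorphism `f : U → V` (with inverse `g`) between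
open subsets `U ⊆ X`, `V ⊆ Y` is locally convex provided `f` is locally second
order Lipschitz and `g = f⁻¹` is locally Lipschitz. -/
theorem local_convexity_second_order_lipschitz
    (X Y : Type*) [NormedAddCommGroup X] [NormedSpace ℝ X] [CompleteSpace X]
    [NormedAddCommGroup Y] [NormedSpace ℝ Y] [CompleteSpace Y]
    -- `Y` has modulus of convexity of power 2:
    (hY : ∃ C : ℝ, 0 < C ∧ ∀ u v : Y, ‖u‖ ≤ 1 → ‖v‖ ≤ 1 →
      ‖(1 / 2 : ℝ) • (u + v)‖ ≤ 1 - C * ‖u - v‖ ^ 2)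
    (U : Set X) (V : Set Y) (hUopen : IsOpen U) (hVopen : IsOpen V)
    (f : X → Y) (g : Y → X)
    (hfV : Set.MapsTo f U V) (hgU : Set.MapsTo g V U)
    (hgf : ∀ x ∈ U, g (f x) = x) (hfg : ∀ y ∈ V, f (g y) = y)
    (hfc : ContinuousOn f U) (hgc : ContinuousOn g V)
    -- `f` is locally second order Lipschitz:
    (hf2 : ∀ x₀ ∈ U, ∃ W ∈ nhds x₀, W ⊆ U ∧ ∃ L : ℝ,
      ∀ x h : X, segment ℝ (x - h) (x + h) ⊆ W →
        ‖f (x + h) - (2 : ℝ) • f x + f (x - h)‖ ≤ L * ‖h‖ ^ 2)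
    -- `g = f⁻¹` is locally Lipschitz:
    (hglip : ∀ y₀ ∈ V, ∃ W' ∈ nhds y₀, W' ⊆ V ∧ ∃ L : ℝ,
      ∀ u ∈ W', ∀ v ∈ W', ‖g u - g v‖ ≤ L * ‖u - v‖) :
    -- `f` is locally convex:
    ∀ x₀ ∈ U, ∀ O : Set X, IsOpen O → x₀ ∈ O → O ⊆ U →
      ∃ Ux : Set X, Ux ∈ nhds x₀ ∧ Ux ⊆ O ∧ Convex ℝ Ux ∧
        Convex ℝ (f '' Ux) := by
  intro x₀ hx₀ O hO hx₀O hOU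
  obtain ⟨C, hC, hconv⟩ := hY
  have hy₀V : f x₀ ∈ V := hfV hx₀
  obtain ⟨W, hWnhds, hWU, L, hL⟩ := hf2 x₀ hx₀
  obtain ⟨W', hW'nhds, hW'V, L', hLip⟩ := hglip (f x₀) hy₀V
  set y₀ := f x₀ with hy₀
  set L₁ : ℝ := max L 0 with hL₁def
  set M : ℝ := max L' 1 with hMdef
  have hM1 : (1:ℝ) ≤ M := le_max_right _ _
  have hM0 : (0:ℝ) < M := lt_of_lt_of_le one_pos hM1
  have hL₁0 : (0:ℝ) ≤ L₁ := le_max_right _ _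
  have hLL₁ : L ≤ L₁ := le_max_left _ _
  have hL'M : L' ≤ M := le_max_left _ _
  clear_value L₁ M
  obtain ⟨r, hr0, hrsub⟩ : ∃ r > 0, Metric.closedBall x₀ r ⊆ W ∩ O := by
    rcases Metric.nhds_basis_closedBall.mem_iff.1
      (Filter.inter_mem hWnhds (hO.mem_nhds hx₀O)) with ⟨r, hr, h⟩
    exact ⟨r, hr, h⟩
  obtain ⟨R₀, hR₀0, hR₀sub⟩ : ∃ R > 0, Metric.closedBall y₀ R ⊆ W' := by
    rcases Metric.nhds_basis_closedBall.mem_iff.1 hW'nhds with ⟨R, hR, h⟩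
    exact ⟨R, hR, h⟩
  set R : ℝ := min R₀ (min (r / M) (8 * C / ((L₁ + 1) * M ^ 2))) with hRdef
  have hR0 : 0 < R := by
    apply lt_min hR₀0
    apply lt_min (by positivity) (by positivity)
  have hRR₀ : R ≤ R₀ := min_le_left _ _
  have hRrM : R ≤ r / M := le_trans (min_le_right _ _) (min_le_left _ _)
  have hRCdiv : R ≤ 8 * C / ((L₁ + 1) * M ^ 2) := le_trans (min_le_right _ _) (min_le_right _ _)
  clear_value R
  have hRr : M * R ≤ r := by
    calc M * R ≤ M * (r / M) := by nlinarith [hRrM]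
      _ = r := by field_simp
  have hRC : (L₁ + 1) * M ^ 2 * R ≤ 8 * C := by
    have h1 := hRCdiv
    have h2 : (0:ℝ) < (L₁ + 1) * M ^ 2 := by positivity
    rw [le_div_iff₀ h2] at h1
    linarith
  have hballW : Metric.closedBall x₀ r ⊆ W := fun x hx => (hrsub hx).1
  have hballO : Metric.closedBall x₀ r ⊆ O := fun x hx => (hrsub hx).2
  have hballU : Metric.closedBall x₀ r ⊆ U := fun x hx => hWU (hballW hx)
  have hBW' : Metric.closedBall y₀ R ⊆ W' := fun y hy =>
    hR₀sub (Metric.closedBall_subset_closedBall hRR₀ hy)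
  have hBV : Metric.closedBall y₀ R ⊆ V := fun y hy => hW'V (hBW' hy)
  have hy₀B : y₀ ∈ Metric.closedBall y₀ R := Metric.mem_closedBall_self hR0.le
  have hLipM : ∀ u ∈ W', ∀ v ∈ W', ‖g u - g v‖ ≤ M * ‖u - v‖ := fun u hu v hv =>
    le_trans (hLip u hu v hv) (mul_le_mul_of_nonneg_right hL'M (norm_nonneg _))
  set Ux : Set X := Metric.closedBall x₀ r ∩ {x | f x ∈ Metric.closedBall y₀ R} with hUxdef
  -- the midpoint property
  have key : ∀ x₁ ∈ Ux, ∀ x₂ ∈ Ux, (1/2 : ℝ) • (x₁ + x₂) ∈ Ux := by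
    rintro x₁ ⟨hx₁b, hx₁f⟩ x₂ ⟨hx₂b, hx₂f⟩
    have hx₁f' : ‖f x₁ - y₀‖ ≤ R := by
      rw [← dist_eq_norm]; exact hx₁f
    have hx₂f' : ‖f x₂ - y₀‖ ≤ R := by
      rw [← dist_eq_norm]; exact hx₂f
    set x : X := (1/2 : ℝ) • (x₁ + x₂) with hxdef
    set hv : X := (1/2 : ℝ) • (x₁ - x₂) with hvdef
    have hxh1 : x + hv = x₁ := by rw [hxdef, hvdef]; module
    have hxh2 : x - hv = x₂ := by rw [hxdef, hvdef]; module
    have hmb : x ∈ Metric.closedBall x₀ r := by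
      have h := (convex_closedBall x₀ r) hx₁b hx₂b (by norm_num : (0:ℝ) ≤ 1/2)
        (by norm_num : (0:ℝ) ≤ 1/2) (by norm_num)
      simpa [hxdef, smul_add] using h
    refine ⟨hmb, ?_⟩
    have hseg : segment ℝ (x - hv) (x + hv) ⊆ W := by
      rw [hxh1, hxh2]
      exact fun z hz => hballW ((convex_closedBall x₀ r).segment_subset hx₂b hx₁b hz)
    have hE := hL x hv hseg
    rw [hxh1, hxh2] at hE
    set E : Y := f x₁ - (2 : ℝ) • f x + f x₂ with hEdef
    clear_value x hv
    have hE' : ‖E‖ ≤ L₁ * ‖hv‖ ^ 2 :=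
      le_trans hE (mul_le_mul_of_nonneg_right hLL₁ (sq_nonneg ‖hv‖))
    clear_value E
    -- uniform convexity estimate
    set u : Y := R⁻¹ • (f x₁ - y₀) with hudef
    set v : Y := R⁻¹ • (f x₂ - y₀) with hvvdef
    have hRinv : (0:ℝ) ≤ R⁻¹ := (inv_pos.2 hR0).le
    have hnu : ‖u‖ ≤ 1 := by
      rw [hudef, norm_smul, Real.norm_eq_abs, abs_of_nonneg hRinv]
      rw [inv_mul_le_iff₀ hR0]; simpa using hx₁f'
    have hnv : ‖v‖ ≤ 1 := by
      rw [hvvdef, norm_smul, Real.norm_eq_abs, abs_of_nonneg hRinv]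
      rw [inv_mul_le_iff₀ hR0]; simpa using hx₂f'
    have hcv := hconv u v hnu hnv
    set A : ℝ := ‖(1/2 : ℝ) • ((f x₁ - y₀) + (f x₂ - y₀))‖ with hAdef
    set d : ℝ := ‖f x₁ - f x₂‖ with hddef
    have hAeq : ‖(1/2 : ℝ) • (u + v)‖ = R⁻¹ * A := by
      have : (1/2 : ℝ) • (u + v) = R⁻¹ • ((1/2 : ℝ) • ((f x₁ - y₀) + (f x₂ - y₀))) := by
        rw [hudef, hvvdef]; module
      rw [this, norm_smul, Real.norm_eq_abs, abs_of_nonneg hRinv]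
    have hdeq : ‖u - v‖ = R⁻¹ * d := by
      have : u - v = R⁻¹ • (f x₁ - f x₂) := by rw [hudef, hvvdef]; module
      rw [this, norm_smul, Real.norm_eq_abs, abs_of_nonneg hRinv]
    rw [hAeq, hdeq] at hcv
    have hA2 : A ≤ R - C * d ^ 2 / R := by
      have h := mul_le_mul_of_nonneg_left hcv hR0.le
      have hRne : R ≠ 0 := hR0.ne'
      calc A = R * (R⁻¹ * A) := by field_simp
        _ ≤ R * (1 - C * (R⁻¹ * d) ^ 2) := h
        _ = R - C * d ^ 2 / R := by field_simp
    -- decomposition of f x - y₀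
    have hdecomp : f x - y₀ = (1/2 : ℝ) • ((f x₁ - y₀) + (f x₂ - y₀)) - (1/2 : ℝ) • E := by
      rw [hEdef]; module
    have htri : ‖f x - y₀‖ ≤ A + (1/2) * ‖E‖ := by
      rw [hdecomp]
      refine le_trans (norm_sub_le _ _) ?_
      have h1 : ‖(1/2 : ℝ) • E‖ = (1/2) * ‖E‖ := by
        rw [norm_smul, Real.norm_eq_abs]; norm_num
      rw [h1]
    -- Lipschitz control of ‖x₁ - x₂‖
    have hx₁U : x₁ ∈ U := hballU hx₁b
    have hx₂U : x₂ ∈ U := hballU hx₂b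
    have hx12 : ‖x₁ - x₂‖ ≤ M * d := by
      have h := hLipM (f x₁) (hBW' hx₁f) (f x₂) (hBW' hx₂f)
      rwa [hgf x₁ hx₁U, hgf x₂ hx₂U] at h
    have hhv : ‖hv‖ ≤ (1/2) * (M * d) := by
      rw [hvdef, norm_smul, Real.norm_eq_abs]
      rw [show |(1/2 : ℝ)| = 1/2 by norm_num]
      linarith [hx12]
    have hd0 : (0:ℝ) ≤ d := norm_nonneg _
    have hfinal : ‖f x - y₀‖ ≤ R := by
      have hhv2 : ‖hv‖ ^ 2 ≤ (1/4) * M ^ 2 * d ^ 2 := by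
        nlinarith [norm_nonneg hv]
      have hE2 : (1/2) * ‖E‖ ≤ (1/8) * L₁ * M ^ 2 * d ^ 2 := by
        nlinarith [norm_nonneg E]
      have hgap : (1/8) * L₁ * M ^ 2 * d ^ 2 ≤ C * d ^ 2 / R := by
        rw [le_div_iff₀ hR0]
        nlinarith [mul_le_mul_of_nonneg_right hRC (sq_nonneg d),
          mul_nonneg (mul_nonneg (sq_nonneg M) hR0.le) (sq_nonneg d)]
      linarith
    show f x ∈ Metric.closedBall y₀ R
    rw [Metric.mem_closedBall, dist_eq_norm]
    exact hfinal
  -- convexity of Ux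
  have hUxconv : Convex ℝ Ux := by
    intro x₁ hx₁ x₂ hx₂ a b haa hbb hab
    set γ : ℝ → X := fun t => x₁ + t • (x₂ - x₁) with hγdef
    have hγmem : ∀ t ∈ Set.Icc (0:ℝ) 1, γ t ∈ Metric.closedBall x₀ r := by
      rintro t ⟨ht0, ht1⟩
      have h := (convex_closedBall x₀ r) hx₁.1 hx₂.1 (by linarith : (0:ℝ) ≤ 1 - t) ht0
        (by ring)
      have heq : γ t = (1 - t) • x₁ + t • x₂ := by rw [hγdef]; module
      rwa [heq]
    set S : Set ℝ := Set.Icc (0:ℝ) 1 ∩ (f ∘ γ) ⁻¹' Metric.closedBall y₀ R with hSdef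
    have hγc : Continuous γ := by
      rw [hγdef]; fun_prop
    have hfγ : ContinuousOn (f ∘ γ) (Set.Icc (0:ℝ) 1) :=
      hfc.comp hγc.continuousOn (fun t ht => hballU (hγmem t ht))
    have hSclosed : IsClosed S :=
      hfγ.preimage_isClosed_of_isClosed isClosed_Icc Metric.isClosed_closedBall
    have hγ0 : γ 0 = x₁ := by simp [hγdef]
    have hγ1 : γ 1 = x₂ := by rw [hγdef]; simp
    have h0S : (0:ℝ) ∈ S := by
      refine ⟨by norm_num, ?_⟩
      show f (γ 0) ∈ Metric.closedBall y₀ R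
      rw [hγ0]; exact hx₁.2
    have h1S : (1:ℝ) ∈ S := by
      refine ⟨by norm_num, ?_⟩
      show f (γ 1) ∈ Metric.closedBall y₀ R
      rw [hγ1]; exact hx₂.2
    have hmidS : ∀ s ∈ S, ∀ t ∈ S, (s + t) / 2 ∈ S := by
      rintro s ⟨hsI, hsB⟩ t ⟨htI, htB⟩
      have hsUx : γ s ∈ Ux := ⟨hγmem s hsI, hsB⟩
      have htUx : γ t ∈ Ux := ⟨hγmem t htI, htB⟩
      have hmid := key (γ s) hsUx (γ t) htUx
      have heq : γ ((s + t) / 2) = (1/2 : ℝ) • (γ s + γ t) := by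
        rw [hγdef]; show x₁ + ((s + t)/2) • (x₂ - x₁) = _; module
      refine ⟨⟨?_, ?_⟩, ?_⟩
      · linarith [hsI.1, htI.1]
      · linarith [hsI.2, htI.2]
      · show f (γ ((s + t) / 2)) ∈ Metric.closedBall y₀ R
        rw [heq]
        exact hmid.2
    have hfull := Icc_subset_of_closed_midpoint S hSclosed h0S h1S hmidS
    have hb1 : b ≤ 1 := by linarith
    have hbS := hfull ⟨hbb, hb1⟩
    have heq : a • x₁ + b • x₂ = γ b := by
      have ha' : a = 1 - b := by linarith
      subst ha'; rw [hγdef]; module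
    rw [heq]
    exact ⟨hγmem b ⟨hbb, hb1⟩, hbS.2⟩
  -- image of Ux is the closed ball
  have himg : f '' Ux = Metric.closedBall y₀ R := by
    apply Set.Subset.antisymm
    · rintro _ ⟨x, hx, rfl⟩; exact hx.2
    · intro y hy
      have hyV : y ∈ V := hBV hy
      refine ⟨g y, ⟨?_, ?_⟩, hfg y hyV⟩
      · have h := hLipM y (hBW' hy) y₀ (hBW' hy₀B)
        have hgy₀ : g y₀ = x₀ := hgf x₀ hx₀
        rw [Metric.mem_closedBall, dist_eq_norm]
        have hyR : ‖y - y₀‖ ≤ R := by rw [← dist_eq_norm]; exact hy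
        calc ‖g y - x₀‖ = ‖g y - g y₀‖ := by rw [hgy₀]
          _ ≤ M * ‖y - y₀‖ := h
          _ ≤ M * R := by nlinarith
          _ ≤ r := hRr
      · show f (g y) ∈ Metric.closedBall y₀ R
        rw [hfg y hyV]; exact hy
  refine ⟨Ux, ?_, fun x hx => hballO hx.1, hUxconv, ?_⟩
  · have hcf : ContinuousAt f x₀ := hfc.continuousAt (hUopen.mem_nhds hx₀)
    have h1 : {x | f x ∈ Metric.closedBall y₀ R} ∈ nhds x₀ :=
      hcf (Metric.closedBall_mem_nhds y₀ hR0)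
    exact Filter.inter_mem (Metric.closedBall_mem_nhds x₀ hr0) h1
  · rw [himg]; exact convex_closedBall y₀ R
end

section
/- Let f : X → Y be Fréchet differentiable on a convex set containing the segment [x₀, x̄] with derivative map Lipschitz of constant L, and suppose ‖(f'_{x₀})*(y)‖ ≥ μ₀‖y‖ for all y ∈ Y. If ‖x̄ − x₀‖ ≤ 2ε and μ := μ₀ − Lε > 0, then the operator T = ∫₀¹ f'_{x(t)} dt (where x(t) = x₀ + t(x̄ − x₀)) satisfies ‖T*(y)‖ ≥ μ‖y‖ for all y ∈ Y, and f(x̄) − f(x₀) = T(x̄ − x₀). -/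
/-- Let `f : X → Y` (Hilbert spaces) be Fréchet differentiable on a convex set
containing the segment `[x₀, xb]`, with `L`-Lipschitz derivative map, and
suppose `‖(f'_{x₀})* y‖ ≥ μ₀‖y‖` for all `y`. If `‖xb - x₀‖ ≤ 2ε` and
`μ := μ₀ - Lε > 0`, then `T = ∫₀¹ f'_{x₀ + t(xb - x₀)} dt` satisfies
`‖T* y‖ ≥ μ‖y‖` for all `y ∈ Y`, and `f xb - f x₀ = T (xb - x₀)`. -/
theorem homotopy_operator_bounded_below
    (X Y : Type*) [NormedAddCommGroup X] [InnerProductSpace ℝ X] [CompleteSpace X]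
    [NormedAddCommGroup Y] [InnerProductSpace ℝ Y] [CompleteSpace Y]
    (f : X → Y) (f' : X → X →L[ℝ] Y) (s : Set X) (hs : Convex ℝ s)
    (x₀ xb : X) (ε L μ₀ : ℝ) (hε : 0 < ε) (hL : 0 ≤ L)
    (hseg : segment ℝ x₀ xb ⊆ s)
    (hdiff : ∀ x ∈ s, HasFDerivAt f (f' x) x)
    (hlip : ∀ x ∈ s, ∀ y ∈ s, ‖f' x - f' y‖ ≤ L * ‖x - y‖)
    (hadj : ∀ y : Y, μ₀ * ‖y‖ ≤ ‖ContinuousLinearMap.adjoint (f' x₀) y‖)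
    (hdist : ‖xb - x₀‖ ≤ 2 * ε) (hμ : 0 < μ₀ - L * ε) :
    (∀ y : Y, (μ₀ - L * ε) * ‖y‖ ≤
        ‖ContinuousLinearMap.adjoint
          (∫ t in (0 : ℝ)..1, f' (x₀ + t • (xb - x₀))) y‖) ∧
      f xb - f x₀ = (∫ t in (0 : ℝ)..1, f' (x₀ + t • (xb - x₀))) (xb - x₀) := by
  set v := xb - x₀ with hv
  have hmem : ∀ t ∈ Set.Icc (0:ℝ) 1, x₀ + t • v ∈ s := by
    intro t ht
    apply hseg
    rw [segment_eq_image']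
    exact ⟨t, ht, rfl⟩
  have hcont : ContinuousOn (fun t : ℝ => f' (x₀ + t • v)) (Set.Icc 0 1) := by
    have hlipOn : LipschitzOnWith (Real.toNNReal (L * ‖v‖))
        (fun t : ℝ => f' (x₀ + t • v)) (Set.Icc 0 1) := by
      rw [lipschitzOnWith_iff_dist_le_mul]
      intro t ht t' ht'
      have h := hlip _ (hmem t ht) _ (hmem t' ht')
      rw [dist_eq_norm, dist_eq_norm]
      have hx : (x₀ + t • v) - (x₀ + t' • v) = (t - t') • v := by
        rw [add_sub_add_left_eq_sub, ← sub_smul]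
      calc ‖f' (x₀ + t • v) - f' (x₀ + t' • v)‖
          ≤ L * ‖(x₀ + t • v) - (x₀ + t' • v)‖ := h
        _ = L * (|t - t'| * ‖v‖) := by rw [hx, norm_smul, Real.norm_eq_abs]
        _ = Real.toNNReal (L * ‖v‖) * ‖t - t'‖ := by
            rw [Real.coe_toNNReal _ (by positivity), Real.norm_eq_abs]; ring
    exact hlipOn.continuousOn
  have hIcc : Set.uIcc (0:ℝ) 1 = Set.Icc 0 1 := Set.uIcc_of_le zero_le_one
  have hInt : IntervalIntegrable (fun t : ℝ => f' (x₀ + t • v))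
      MeasureTheory.volume 0 1 := by
    apply ContinuousOn.intervalIntegrable
    rwa [hIcc]
  set T := ∫ t in (0:ℝ)..1, f' (x₀ + t • v) with hT
  -- FTC part
  have hFTC : f xb - f x₀ = T v := by
    have hInt2 : IntervalIntegrable (fun t : ℝ => (f' (x₀ + t • v)) v)
        MeasureTheory.volume 0 1 := by
      apply ContinuousOn.intervalIntegrable
      rw [hIcc]
      exact hcont.clm_apply continuousOn_const
    have hder : ∀ t ∈ Set.uIcc (0:ℝ) 1,
        HasDerivAt (fun t : ℝ => f (x₀ + t • v)) ((f' (x₀ + t • v)) v) t := by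
      intro t ht
      rw [hIcc] at ht
      have hx : HasDerivAt (fun t : ℝ => x₀ + t • v) v t := by
        simpa using ((hasDerivAt_id t).smul_const v).const_add x₀
      exact (hdiff _ (hmem t ht)).comp_hasDerivAt t hx
    have h := intervalIntegral.integral_eq_sub_of_hasDerivAt hder hInt2
    have happ : T v = ∫ t in (0:ℝ)..1, (f' (x₀ + t • v)) v :=
      ContinuousLinearMap.intervalIntegral_apply hInt v
    rw [happ, h]
    simp [hv]
  refine ⟨?_, hFTC⟩
  -- norm bound
  have hbound : ‖T - f' x₀‖ ≤ L * ε := by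
    have h1 : T - f' x₀ = ∫ t in (0:ℝ)..1, (f' (x₀ + t • v) - f' x₀) := by
      rw [intervalIntegral.integral_sub hInt intervalIntegrable_const,
        intervalIntegral.integral_const]
      simp [hT]
    rw [h1]
    have hg : IntervalIntegrable (fun t : ℝ => L * ‖v‖ * t)
        MeasureTheory.volume 0 1 := (continuous_const.mul continuous_id).intervalIntegrable 0 1
    have hle : ‖∫ t in (0:ℝ)..1, (f' (x₀ + t • v) - f' x₀)‖
        ≤ |∫ t in (0:ℝ)..1, L * ‖v‖ * t| := by
      apply intervalIntegral.norm_integral_le_abs_of_norm_le _ hg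
      filter_upwards [MeasureTheory.ae_restrict_mem measurableSet_Ioc] with t ht
      have ht' : t ∈ Set.Icc (0:ℝ) 1 := by
        rw [Set.uIoc_of_le zero_le_one] at ht
        exact ⟨le_of_lt ht.1, ht.2⟩
      have h := hlip _ (hmem t ht') _ (hmem 0 (by norm_num))
      simp only [zero_smul, add_zero] at h
      calc ‖f' (x₀ + t • v) - f' x₀‖ ≤ L * ‖(x₀ + t • v) - x₀‖ := h
        _ = L * (|t| * ‖v‖) := by
            rw [add_sub_cancel_left, norm_smul, Real.norm_eq_abs]
        _ = L * ‖v‖ * t := by rw [abs_of_nonneg ht'.1]; ring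
    have hval : (∫ t in (0:ℝ)..1, L * ‖v‖ * t) = L * ‖v‖ / 2 := by
      rw [intervalIntegral.integral_const_mul, integral_id]
      ring
    have h5 : L * ‖v‖ / 2 ≤ L * ε := by nlinarith [hdist]
    have habs : |∫ t in (0:ℝ)..1, L * ‖v‖ * t| = L * ‖v‖ / 2 := by
      rw [hval]; exact abs_of_nonneg (by positivity)
    linarith [habs ▸ hle]
  intro y
  have hsub : ContinuousLinearMap.adjoint T y - ContinuousLinearMap.adjoint (f' x₀) y
      = ContinuousLinearMap.adjoint (T - f' x₀) y := by
    rw [map_sub]; rfl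
  have h2 : ‖ContinuousLinearMap.adjoint T y - ContinuousLinearMap.adjoint (f' x₀) y‖
      ≤ L * ε * ‖y‖ := by
    rw [hsub]
    calc ‖ContinuousLinearMap.adjoint (T - f' x₀) y‖
        ≤ ‖ContinuousLinearMap.adjoint (T - f' x₀)‖ * ‖y‖ :=
          ContinuousLinearMap.le_opNorm _ y
      _ = ‖T - f' x₀‖ * ‖y‖ := by
            rw [LinearIsometryEquiv.norm_map ContinuousLinearMap.adjoint (T - f' x₀)]
      _ ≤ L * ε * ‖y‖ := mul_le_mul_of_nonneg_right hbound (norm_nonneg y)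
  have h3 := hadj y
  have h4 : ‖ContinuousLinearMap.adjoint (f' x₀) y‖
      ≤ ‖ContinuousLinearMap.adjoint T y‖
        + ‖ContinuousLinearMap.adjoint T y - ContinuousLinearMap.adjoint (f' x₀) y‖ := by
    have := norm_sub_norm_le (ContinuousLinearMap.adjoint (f' x₀) y)
      (ContinuousLinearMap.adjoint T y)
    rw [norm_sub_rev] at this
    linarith
  nlinarith
end
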